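/- arXiv:2308.11191 — 2 statements merged into one kernel-verified Lean document; each statement's English description precedes it below -/
import Mathlib

section
/- Let p be a prime number and O a complete discrete valuation ring whose maximal ideal is generated by p, and let c ≥ 2 be an integer not divisible by p (so the image of c in O is a unit). Let A := O⟦μ⟧ and let γ : A → A be the O-algebra homomorphism, continuous for the μ-adic topology, determined by γ(μ) = (1+μ)^c − 1. Then γ(μ) = μ·u for a unit u of A, so γ extends uniquely to a ring endomorphism of A[1/μ]. Let N and N' be finite free A-modules, equipped with γ-semilinear additive endomorphisms σ_N and σ_{N'} respectively (σ(a·x) = γ(a)·σ(x)) such that σ_N(x) − x ∈ μN for every x ∈ N and σ_{N'}(y) − y ∈ μN' for every y ∈ N' (the actions are trivial modulo μ); extend σ_N and σ_{N'} to γ-semilinear endomorphisms of N[1/μ] and N'[1/μ] by σ(x/μ^k) := σ(x)/γ(μ)^k. If f : N[1/μ] → N'[1/μ] is an A[1/μ]-linear map satisfying f ∘ σ_N = σ_{N'} ∘ f, then f(N) ⊆ N'. -/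
/-!
Statement 1: Let `O` be a complete discrete valuation ring with maximal ideal generated
by a prime `p`, let `c ≥ 2` be an integer not divisible by `p`, and let
`γ : O⟦μ⟧ → O⟦μ⟧` be the continuous `O`-algebra endomorphism with `γ(μ) = (1+μ)^c - 1`.
If `N, N'` are finite free `O⟦μ⟧`-modules with `γ`-semilinear endomorphisms `σ, σ'`
which are trivial modulo `μ`, and `f : N[1/μ] → N'[1/μ]` is an `O⟦μ⟧[1/μ]`-linear map
commuting with the (extended) semilinear endomorphisms, then `f(N) ⊆ N'`.
-/

open PowerSeries

private lemma coeff_one_one_add_X_pow (O : Type*) [CommRing O] (c : ℕ) :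
    coeff 1 ((1 + X : PowerSeries O) ^ c) = c := by
  induction c with
  | zero => simp
  | succ n ih =>
    rw [pow_succ, mul_add, mul_one, map_add, ih, coeff_succ_mul_X 0,
      coeff_zero_eq_constantCoeff_apply, map_pow, map_add, constantCoeff_one, constantCoeff_X]
    push_cast
    ring

private lemma free_div_aux {O : Type*} [CommRing O] [IsDomain O]
    {M : Type*} [AddCommGroup M] [Module (PowerSeries O) M] [Module.Free (PowerSeries O) M]
    {d : O} (hd : d ≠ 0) {y y₁ : M}
    (h : (PowerSeries.C d) • y = (X : PowerSeries O) • y₁) :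
    ∃ y', y = (X : PowerSeries O) • y' := by
  classical
  obtain ⟨ι, b⟩ := Module.Free.exists_basis (R := PowerSeries O) (M := M)
  have hcoord : ∀ i, (X : PowerSeries O) ∣ b.repr y i := by
    intro i
    have h2 : (PowerSeries.C d) * b.repr y i = (X : PowerSeries O) * b.repr y₁ i := by
      have := congrArg (fun z => b.repr z i) h
      simpa [map_smul, Finsupp.smul_apply, smul_eq_mul] using this
    have h3 : d * constantCoeff (b.repr y i) = 0 := by
      have := congrArg (constantCoeff) h2
      simpa using this
    rw [X_dvd_iff]
    rcases mul_eq_zero.1 h3 with h4 | h4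
    · exact absurd h4 hd
    · exact h4
  choose q hq using hcoord
  refine ⟨∑ i ∈ (b.repr y).support, q i • b i, ?_⟩
  have hy : y = ∑ i ∈ (b.repr y).support, (b.repr y i) • b i := by
    conv_lhs => rw [← b.linearCombination_repr y]
    rfl
  conv_lhs => rw [hy]
  rw [Finset.smul_sum]
  refine Finset.sum_congr rfl fun i _ => ?_
  rw [smul_smul, ← hq i]

open PowerSeries in
theorem statement1
    (p : ℕ) (hp : p.Prime)
    (O : Type*) [CommRing O] [IsDomain O] [IsDiscreteValuationRing O]
    [IsAdicComplete (Ideal.span {(p : O)}) O]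
    (hmax : Ideal.span {(p : O)} = IsLocalRing.maximalIdeal O)
    (c : ℕ) (hc2 : 2 ≤ c) (hpc : ¬ p ∣ c)
    -- the `O`-algebra endomorphism `γ` of `A = O⟦μ⟧`, determined by
    -- `γ(μ) = (1+μ)^c - 1` and continuity for the `μ`-adic topology
    (γ : PowerSeries O →+* PowerSeries O)
    (hγ : ∀ (f : PowerSeries O) (k : ℕ), (coeff k) (γ f) =
      ∑ n ∈ Finset.range (k + 1),
        (coeff n) f * (coeff k) (((1 + X : PowerSeries O) ^ c - 1) ^ n))
    -- `γ(μ) = μ · u` for a unit `u`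
    (u : (PowerSeries O)ˣ) (hu : γ X = X * (u : PowerSeries O))
    -- finite free modules with `γ`-semilinear endomorphisms, trivial mod `μ`
    (N : Type*) [AddCommGroup N] [Module (PowerSeries O) N]
    [Module.Finite (PowerSeries O) N] [Module.Free (PowerSeries O) N]
    (N' : Type*) [AddCommGroup N'] [Module (PowerSeries O) N']
    [Module.Finite (PowerSeries O) N'] [Module.Free (PowerSeries O) N']
    (σN : N →ₛₗ[γ] N) (σN' : N' →ₛₗ[γ] N')
    (htrivN : ∀ x : N, ∃ y : N, σN x - x = (X : PowerSeries O) • y)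
    (htrivN' : ∀ x : N', ∃ y : N', σN' x - x = (X : PowerSeries O) • y)
    -- the extensions of `σN`, `σN'` to `N[1/μ]`, `N'[1/μ]`,
    -- with `σ(x/μ^m) = σ(x)/γ(μ)^m = u^{-m}·σ(x)/μ^m`
    (σLN : LocalizedModule (Submonoid.powers (X : PowerSeries O)) N →
      LocalizedModule (Submonoid.powers (X : PowerSeries O)) N)
    (hσLN : ∀ (x : N) (m : ℕ),
      σLN (LocalizedModule.mk x
          ((⟨X, Submonoid.mem_powers _⟩ : Submonoid.powers (X : PowerSeries O)) ^ m)) =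
        LocalizedModule.mk ((((u⁻¹ : (PowerSeries O)ˣ) : PowerSeries O) ^ m) • σN x)
          ((⟨X, Submonoid.mem_powers _⟩ : Submonoid.powers (X : PowerSeries O)) ^ m))
    (σLN' : LocalizedModule (Submonoid.powers (X : PowerSeries O)) N' →
      LocalizedModule (Submonoid.powers (X : PowerSeries O)) N')
    (hσLN' : ∀ (x : N') (m : ℕ),
      σLN' (LocalizedModule.mk x
          ((⟨X, Submonoid.mem_powers _⟩ : Submonoid.powers (X : PowerSeries O)) ^ m)) =
        LocalizedModule.mk ((((u⁻¹ : (PowerSeries O)ˣ) : PowerSeries O) ^ m) • σN' x)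
          ((⟨X, Submonoid.mem_powers _⟩ : Submonoid.powers (X : PowerSeries O)) ^ m))
    -- an `A[1/μ]`-linear map commuting with the semilinear endomorphisms
    (f : LocalizedModule (Submonoid.powers (X : PowerSeries O)) N
      →ₗ[Localization (Submonoid.powers (X : PowerSeries O))]
        LocalizedModule (Submonoid.powers (X : PowerSeries O)) N')
    (hcomm : ∀ z, f (σLN z) = σLN' (f z)) :
    ∀ x : N, ∃ y : N',
      f (LocalizedModule.mk x 1) = LocalizedModule.mk y 1 := by
  classical
  set Xs : Submonoid.powers (X : PowerSeries O) := ⟨X, Submonoid.mem_powers _⟩ with hXsdef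
  -- p is not a unit and not zero
  have hpnu : ¬ IsUnit (p : O) := by
    intro h
    have h2 : Ideal.span {(p : O)} = ⊤ := Ideal.span_singleton_eq_top.2 h
    rw [hmax] at h2
    exact (IsLocalRing.maximalIdeal.isMaximal O).ne_top h2
  have hp0 : (p : O) ≠ 0 := by
    intro h
    apply IsDiscreteValuationRing.not_a_field O
    rw [← hmax, h]
    exact Ideal.span_singleton_eq_bot.mpr rfl
  -- O has characteristic zero
  haveI hchar : CharZero O := by
    rcases CharP.char_is_prime_or_zero O (ringChar O) with hq | hq
    · exfalso
      by_cases hqp : ringChar O = p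
      · exact hp0 (by rw [← hqp]; exact CharP.cast_eq_zero O (ringChar O))
      · have hcop : Nat.Coprime (ringChar O) p := (Nat.coprime_primes hq hp).2 hqp
        have hcz : IsCoprime ((ringChar O : ℤ)) ((p : ℕ) : ℤ) :=
          Int.isCoprime_iff_gcd_eq_one.2 (by exact_mod_cast hcop)
        have hco : IsCoprime ((ringChar O : ℕ) : O) ((p : ℕ) : O) := by
          have := hcz.map (Int.castRingHom O)
          simpa using this
        rw [CharP.cast_eq_zero O (ringChar O)] at hco
        exact hpnu (isCoprime_zero_left.mp hco)
    · have : CharP O 0 := hq ▸ ringChar.charP O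
      exact CharP.charP_to_charZero O
  -- c is a unit in O
  have hcu : IsUnit (c : O) := by
    by_contra hnc
    have hcm : (c : O) ∈ Ideal.span {(p : O)} := by
      rw [hmax, IsLocalRing.mem_maximalIdeal]
      exact hnc
    haveI hmaxI : (Ideal.span {(p : O)}).IsMaximal := hmax ▸ IsLocalRing.maximalIdeal.isMaximal O
    haveI : Nontrivial (O ⧸ Ideal.span {(p : O)}) := Ideal.Quotient.nontrivial_iff.mpr hmaxI.ne_top
    have hpk : ((p : ℕ) : O ⧸ Ideal.span {(p : O)}) = 0 := by
      rw [← map_natCast (Ideal.Quotient.mk (Ideal.span {(p : O)})) p]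
      exact Ideal.Quotient.eq_zero_iff_mem.2 (Ideal.mem_span_singleton_self _)
    have hck : ((c : ℕ) : O ⧸ Ideal.span {(p : O)}) = 0 := by
      rw [← map_natCast (Ideal.Quotient.mk (Ideal.span {(p : O)})) c]
      exact Ideal.Quotient.eq_zero_iff_mem.2 hcm
    have hdvd_p : ringChar (O ⧸ Ideal.span {(p : O)}) ∣ p :=
      (CharP.cast_eq_zero_iff _ (ringChar _) p).1 hpk
    have hdvd_c : ringChar (O ⧸ Ideal.span {(p : O)}) ∣ c :=
      (CharP.cast_eq_zero_iff _ (ringChar _) c).1 hck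
    rcases Nat.Prime.eq_one_or_self_of_dvd hp _ hdvd_p with h1 | h1
    · have h2 : ((1 : ℕ) : O ⧸ Ideal.span {(p : O)}) = 0 := by
        rw [← h1]
        exact CharP.cast_eq_zero _ (ringChar _)
      simp at h2
    · exact hpc (h1 ▸ hdvd_c)
  -- constant coefficient of u is c
  have hu1 : constantCoeff (u : PowerSeries O) = (c : O) := by
    have h1 : coeff 1 (γ X) = coeff 0 (u : PowerSeries O) := by
      rw [hu, coeff_succ_X_mul 0]
    have h2 : coeff 1 (γ X) = (c : O) := by
      rw [hγ X 1, Finset.sum_range_succ, Finset.sum_range_one]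
      simp [pow_one, coeff_one_one_add_X_pow O c]
    rw [← coeff_zero_eq_constantCoeff_apply, ← h1, h2]
  set e : O := constantCoeff ((u⁻¹ : (PowerSeries O)ˣ) : PowerSeries O) with hedef
  have hce : (c : O) * e = 1 := by
    have h2 := congrArg (constantCoeff) u.mul_inv
    rw [map_mul, map_one, hu1] at h2
    exact h2
  have hdm : ∀ m : ℕ, e ^ (m + 1) - 1 ≠ 0 := by
    intro m h
    have h1 : e ^ (m + 1) = 1 := by rwa [sub_eq_zero] at h
    have h2 : ((c : O)) ^ (m + 1) = 1 := by
      have h3 : ((c : O) * e) ^ (m + 1) = 1 := by rw [hce, one_pow]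
      rwa [mul_pow, h1, mul_one] at h3
    have h4 : ((c ^ (m + 1) : ℕ) : O) = ((1 : ℕ) : O) := by push_cast; rw [h2]
    have h5 : c ^ (m + 1) = 1 := Nat.cast_injective h4
    rcases pow_eq_one_iff.mp h5 with h6 | h6 <;> omega
  -- cancellation in the localized module
  have hS0 : (0 : PowerSeries O) ∉ Submonoid.powers (X : PowerSeries O) := by
    rintro ⟨k, hk⟩
    exact pow_ne_zero k X_ne_zero hk
  have hcancel : ∀ (a b : N') (k : ℕ),
      LocalizedModule.mk a (Xs ^ k) = LocalizedModule.mk b (Xs ^ k) → a = b := by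
    intro a b k h
    rw [LocalizedModule.mk_eq] at h
    obtain ⟨t, ht⟩ := h
    have h2 : (((t : PowerSeries O) * ((Xs ^ k : _) : PowerSeries O))) • a
        = (((t : PowerSeries O) * ((Xs ^ k : _) : PowerSeries O))) • b := by
      simpa [Submonoid.smul_def, ← mul_smul] using ht
    have hne : ((t : PowerSeries O) * ((Xs ^ k : _) : PowerSeries O)) ≠ 0 :=
      mul_ne_zero (fun h0 => hS0 (h0 ▸ t.2)) (fun h0 => hS0 (h0 ▸ (Xs ^ k).2))
    exact smul_right_injective N' hne h2
  -- the A-linear map x ↦ f (mk x 1)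
  set F : N →ₗ[PowerSeries O] LocalizedModule (Submonoid.powers (X : PowerSeries O)) N' :=
    (f.restrictScalars (PowerSeries O)).comp
      (LocalizedModule.mkLinearMap (Submonoid.powers (X : PowerSeries O)) N) with hFdef
  have hF : ∀ x : N, F x = f (LocalizedModule.mk x 1) := fun _ => rfl
  -- elements with denominator X^(k+j) from denominator X^k
  have hGup : ∀ (k j : ℕ) (y : N'), LocalizedModule.mk y (Xs ^ k)
      = LocalizedModule.mk ((X : PowerSeries O) ^ j • y) (Xs ^ (j + k)) := by
    intro k j y
    rw [pow_add, ← LocalizedModule.mk_cancel_common_left (Xs ^ j) (Xs ^ k) y]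
    rfl
  -- representation of elements of the localized module
  have hrep : ∀ w : LocalizedModule (Submonoid.powers (X : PowerSeries O)) N',
      ∃ (k : ℕ) (y : N'), w = LocalizedModule.mk y (Xs ^ k) := by
    intro w
    induction w using LocalizedModule.induction_on with
    | _ y s =>
      obtain ⟨k, hk⟩ := s.2
      refine ⟨k, y, ?_⟩
      congr 1
      exact Subtype.ext (by rw [SubmonoidClass.coe_pow]; exact hk.symm)
  -- uniform denominator
  have hPexists : ∃ m : ℕ, ∀ x : N, ∃ y : N', F x = LocalizedModule.mk y (Xs ^ m) := by
    obtain ⟨s, hs⟩ := Module.Finite.fg_top (R := PowerSeries O) (M := N)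
    choose K Y hKY using fun a : N => hrep (F a)
    refine ⟨s.sup K, fun x => ?_⟩
    set G : N' →ₗ[PowerSeries O] LocalizedModule (Submonoid.powers (X : PowerSeries O)) N' :=
      { toFun := fun y => LocalizedModule.mk y (Xs ^ s.sup K)
        map_add' := fun a b => by
          rw [LocalizedModule.mk_add_mk, ← smul_add, LocalizedModule.mk_cancel_common_left]
        map_smul' := fun r a => by
          rw [RingHom.id_apply]
          exact (LocalizedModule.smul'_mk r a _).symm } with hGdef
    have hx : x ∈ Submodule.comap F (LinearMap.range G) := by
      have hle : Submodule.span (PowerSeries O) ↑s ≤ Submodule.comap F (LinearMap.range G) := by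
        rw [Submodule.span_le]
        intro a ha
        simp only [SetLike.mem_coe, Submodule.mem_comap, LinearMap.mem_range]
        refine ⟨(X : PowerSeries O) ^ (s.sup K - K a) • Y a, ?_⟩
        have hsub : (s.sup K - K a) + K a = s.sup K :=
          Nat.sub_add_cancel (Finset.le_sup (Finset.mem_coe.mp ha))
        show LocalizedModule.mk ((X : PowerSeries O) ^ (s.sup K - K a) • Y a)
          (Xs ^ s.sup K) = F a
        have hG := hGup (K a) (s.sup K - K a) (Y a)
        rw [hsub] at hG
        rw [hKY a, hG]
      exact hle (hs ▸ Submodule.mem_top)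
    obtain ⟨y, hy⟩ := hx
    exact ⟨y, hy.symm⟩
  -- descent step
  have hstep : ∀ m : ℕ,
      (∀ x : N, ∃ y : N', F x = LocalizedModule.mk y (Xs ^ (m + 1))) →
      ∀ x : N, ∃ y : N', F x = LocalizedModule.mk y (Xs ^ m) := by
    intro m hP x
    obtain ⟨y, hy⟩ := hP x
    obtain ⟨z, hz⟩ := htrivN x
    obtain ⟨w, hw⟩ := hP z
    obtain ⟨v, hv⟩ := htrivN' y
    have hσx : σN x = x + (X : PowerSeries O) • z := by rw [← hz]; abel
    have e1 : F (σN x) = LocalizedModule.mk (y + (X : PowerSeries O) • w) (Xs ^ (m + 1)) := by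
      rw [hσx, map_add, map_smul, hy, hw, LocalizedModule.smul'_mk,
        LocalizedModule.mk_add_mk, ← smul_add, LocalizedModule.mk_cancel_common_left]
    have e2 : F (σN x) = LocalizedModule.mk
        ((((u⁻¹ : (PowerSeries O)ˣ) : PowerSeries O)) ^ (m + 1) • σN' y) (Xs ^ (m + 1)) := by
      have h0 : σLN (LocalizedModule.mk x 1) = LocalizedModule.mk (σN x) 1 := by
        have h0' := hσLN x 0
        simpa only [pow_zero, one_smul] using h0'
      calc F (σN x) = f (LocalizedModule.mk (σN x) 1) := hF _
        _ = f (σLN (LocalizedModule.mk x 1)) := by rw [h0]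
        _ = σLN' (f (LocalizedModule.mk x 1)) := hcomm _
        _ = σLN' (LocalizedModule.mk y (Xs ^ (m + 1))) := by rw [← hF x, hy]
        _ = _ := hσLN' y (m + 1)
    have e3 : (((u⁻¹ : (PowerSeries O)ˣ) : PowerSeries O)) ^ (m + 1) • σN' y
        = y + (X : PowerSeries O) • w := hcancel _ _ _ (e2.symm.trans e1)
    have hσy : σN' y = y + (X : PowerSeries O) • v := by rw [← hv]; abel
    set q : PowerSeries O := (((u⁻¹ : (PowerSeries O)ˣ) : PowerSeries O)) ^ (m + 1) with hqdef
    have e4 : (q - 1) • y = (X : PowerSeries O) • (w - q • v) := by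
      rw [hσy, smul_add] at e3
      have hqx : q • ((X : PowerSeries O) • v) = (X : PowerSeries O) • (q • v) := by
        rw [smul_smul, smul_smul, mul_comm]
      rw [hqx] at e3
      calc (q - 1) • y
          = (q • y + (X : PowerSeries O) • (q • v)) - y - (X : PowerSeries O) • (q • v) := by
            rw [sub_smul, one_smul]; abel
        _ = (y + (X : PowerSeries O) • w) - y - (X : PowerSeries O) • (q • v) := by rw [e3]
        _ = (X : PowerSeries O) • (w - q • v) := by rw [smul_sub]; abel
    have hdq : constantCoeff (q - 1) = e ^ (m + 1) - 1 := by
      rw [hqdef, map_sub, map_pow, map_one, hedef]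
    obtain ⟨g, hg⟩ : (X : PowerSeries O) ∣ (q - 1 - C (e ^ (m + 1) - 1)) := by
      rw [X_dvd_iff, map_sub, hdq, constantCoeff_C, sub_self]
    have e5 : (C (e ^ (m + 1) - 1)) • y
        = (X : PowerSeries O) • (w - q • v - g • y) := by
      have hq1 : q - 1 = C (e ^ (m + 1) - 1) + (X : PowerSeries O) * g := by
        rw [← hg]; ring
      have h6 : (C (e ^ (m + 1) - 1)) • y
          = (q - 1) • y - ((X : PowerSeries O) * g) • y := by
        rw [hq1, add_smul]; abel
      rw [h6, e4, mul_smul, ← smul_sub]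
    obtain ⟨y', hy'⟩ := free_div_aux (hdm m) e5
    refine ⟨y', ?_⟩
    rw [hy, hy']
    have hpow : Xs ^ (m + 1) = Xs * Xs ^ m := by rw [pow_succ, mul_comm]
    rw [hpow, ← LocalizedModule.mk_cancel_common_left Xs (Xs ^ m) y']
    rfl
  have hdown : ∀ m : ℕ,
      (∀ x : N, ∃ y : N', F x = LocalizedModule.mk y (Xs ^ m)) →
      ∀ x : N, ∃ y : N', F x = LocalizedModule.mk y (Xs ^ 0) := by
    intro m
    induction m with
    | zero => exact id
    | succ n ih => intro h; exact ih (hstep n h)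
  obtain ⟨m, hm⟩ := hPexists
  intro x
  obtain ⟨y, hy⟩ := hdown m hm x
  refine ⟨y, ?_⟩
  rw [pow_zero] at hy
  rw [← hF x, hy]
end

section
/- Let p be a prime number and K a field of characteristic 0, complete with respect to a nonarchimedean absolute value |·| induced by a discrete valuation in which p is a uniformizer, with valuation ring O_K = {x ∈ K : |x| ≤ 1}. Let B_K^+ denote the subring of K⟦X⟧ consisting of power series with bounded coefficients, i.e. B_K^+ = ⋃_{m≥0} p^{−m}·O_K⟦X⟧ = O_K⟦X⟧[1/p]. Then B_K^+ is contained in B_rig,K^+, and the inclusion ring homomorphism B_K^+ → B_rig,K^+ is faithfully flat. -/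
/-!
Statement 2: Let `K` be a field of characteristic `0`, complete with respect to a
nonarchimedean absolute value induced by a discrete valuation in which the prime `p` is
a uniformizer.  Then the ring `B⁺_K = O_K⟦X⟧[1/p]` of power series with bounded
coefficients is contained in the ring `B⁺_rig,K` of power series converging on the open
unit disk, and the inclusion is faithfully flat.
-/

open PowerSeries Filter Finset

/-- The ring of power series converging on the open unit disk over `K`: those
`f = Σ aₖ Xᵏ` with `‖aₖ‖ * ρᵏ → 0` for every `0 ≤ ρ < 1`. -/
noncomputable def BRig (K : Type*) [NormedField K] : Subring (PowerSeries K) where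
  carrier := {f | ∀ ρ : ℝ, 0 ≤ ρ → ρ < 1 →
    Tendsto (fun k : ℕ => ‖(PowerSeries.coeff k) f‖ * ρ ^ k) atTop (nhds 0)}
  zero_mem' := by
    intro ρ _ _
    simp
  one_mem' := by
    intro ρ _ _
    refine tendsto_const_nhds.congr' ?_
    filter_upwards [eventually_ge_atTop 1] with k hk
    have : (PowerSeries.coeff k) (1 : PowerSeries K) = 0 := by
      simp [PowerSeries.coeff_one, Nat.one_le_iff_ne_zero.mp hk]
    rw [this]; simp
  add_mem' := by
    intro f g hf hg ρ h0 h1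
    have hlim : Tendsto (fun k : ℕ => ‖(PowerSeries.coeff k) f‖ * ρ ^ k
        + ‖(PowerSeries.coeff k) g‖ * ρ ^ k) atTop (nhds 0) := by
      simpa using (hf ρ h0 h1).add (hg ρ h0 h1)
    refine squeeze_zero (fun k => by positivity) (fun k => ?_) hlim
    have hb : ‖(PowerSeries.coeff k) (f + g)‖
        ≤ ‖(PowerSeries.coeff k) f‖ + ‖(PowerSeries.coeff k) g‖ := by
      simp only [map_add]; exact norm_add_le _ _
    calc ‖(PowerSeries.coeff k) (f + g)‖ * ρ ^ k
        ≤ (‖(PowerSeries.coeff k) f‖ + ‖(PowerSeries.coeff k) g‖) * ρ ^ k :=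
          mul_le_mul_of_nonneg_right hb (by positivity)
      _ = ‖(PowerSeries.coeff k) f‖ * ρ ^ k + ‖(PowerSeries.coeff k) g‖ * ρ ^ k := by ring
  neg_mem' := by
    intro f hf ρ h0 h1
    simpa using hf ρ h0 h1
  mul_mem' := by
    intro f g hf hg ρ h0 h1
    obtain ⟨ρ', hρ'0, hρ'1, hρρ'⟩ : ∃ ρ' : ℝ, 0 < ρ' ∧ ρ' < 1 ∧ ρ < ρ' :=
      ⟨(ρ + 1) / 2, by linarith, by linarith, by linarith⟩
    obtain ⟨Ca, hCa⟩ := (hf ρ' hρ'0.le hρ'1).bddAbove_range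
    obtain ⟨Cb, hCb⟩ := (hg ρ' hρ'0.le hρ'1).bddAbove_range
    obtain ⟨Cf, hCf0, hfb⟩ : ∃ C : ℝ, 0 < C ∧ ∀ k : ℕ, ‖(PowerSeries.coeff k) f‖ ≤ C / ρ' ^ k := by
      refine ⟨max Ca 1, lt_of_lt_of_le one_pos (le_max_right _ _), fun k => ?_⟩
      rw [le_div_iff₀ (by positivity)]
      exact le_trans (hCa (Set.mem_range_self k)) (le_max_left _ _)
    obtain ⟨Cg, hCg0, hgb⟩ : ∃ C : ℝ, 0 < C ∧ ∀ k : ℕ, ‖(PowerSeries.coeff k) g‖ ≤ C / ρ' ^ k := by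
      refine ⟨max Cb 1, lt_of_lt_of_le one_pos (le_max_right _ _), fun k => ?_⟩
      rw [le_div_iff₀ (by positivity)]
      exact le_trans (hCb (Set.mem_range_self k)) (le_max_left _ _)
    have hr0 : 0 ≤ ρ / ρ' := by positivity
    have hr1 : ρ / ρ' < 1 := (div_lt_one hρ'0).mpr hρρ'
    have hlim : Tendsto (fun n : ℕ => Cf * Cg * (((n:ℝ) + 1) * (ρ / ρ') ^ n)) atTop (nhds 0) := by
      have h1' : Tendsto (fun n : ℕ => (n:ℝ) * (ρ / ρ') ^ n) atTop (nhds 0) := by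
        have := (summable_pow_mul_geometric_of_norm_lt_one 1
          (r := ρ / ρ') (by rwa [Real.norm_eq_abs, abs_of_nonneg hr0])).tendsto_atTop_zero
        simpa using this
      have h2' : Tendsto (fun n : ℕ => (ρ / ρ') ^ n) atTop (nhds 0) :=
        tendsto_pow_atTop_nhds_zero_of_lt_one hr0 hr1
      have := (h1'.add h2').const_mul (Cf * Cg)
      simpa [add_mul, mul_add] using this
    refine squeeze_zero (fun k => by positivity) (fun n => ?_) hlim
    have hstep : ‖(PowerSeries.coeff n) (f * g)‖ ≤ ((n:ℝ) + 1) * (Cf * Cg / ρ' ^ n) := by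
      rw [PowerSeries.coeff_mul]
      calc ‖∑ p ∈ antidiagonal n, (PowerSeries.coeff p.1) f * (PowerSeries.coeff p.2) g‖
          ≤ ∑ p ∈ antidiagonal n, ‖(PowerSeries.coeff p.1) f * (PowerSeries.coeff p.2) g‖ :=
            norm_sum_le _ _
        _ ≤ ∑ _p ∈ antidiagonal n, Cf * Cg / ρ' ^ n := by
            refine Finset.sum_le_sum fun p hp => ?_
            replace hp : p.1 + p.2 = n := by simpa using hp
            calc ‖(PowerSeries.coeff p.1) f * (PowerSeries.coeff p.2) g‖
                = ‖(PowerSeries.coeff p.1) f‖ * ‖(PowerSeries.coeff p.2) g‖ := norm_mul _ _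
              _ ≤ Cf / ρ' ^ p.1 * (Cg / ρ' ^ p.2) :=
                  mul_le_mul (hfb p.1) (hgb p.2) (norm_nonneg _) (by positivity)
              _ = Cf * Cg / ρ' ^ n := by
                  rw [div_mul_div_comm, ← pow_add, hp]
        _ = ((n:ℝ) + 1) * (Cf * Cg / ρ' ^ n) := by
            rw [Finset.sum_const, Finset.Nat.card_antidiagonal]

            ring
    have hρ'ne : ρ' ^ n ≠ 0 := by positivity
    calc ‖(PowerSeries.coeff n) (f * g)‖ * ρ ^ n
        ≤ ((n:ℝ) + 1) * (Cf * Cg / ρ' ^ n) * ρ ^ n := by gcongr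
      _ = Cf * Cg * (((n:ℝ) + 1) * (ρ / ρ') ^ n) := by
          rw [div_pow]
          field_simp

/-- In a nonarchimedean normed field, a finite sum of elements of norm at most `B ≥ 0`
has norm at most `B`. -/
lemma nonarch_finset_sum_le {K : Type*} [NormedField K]
    (hna : IsNonarchimedean (fun x : K => ‖x‖)) {ι : Type*} (s : Finset ι) (g : ι → K)
    {B : ℝ} (hB : 0 ≤ B) (h : ∀ i ∈ s, ‖g i‖ ≤ B) : ‖∑ i ∈ s, g i‖ ≤ B := by
  classical
  revert h
  induction s using Finset.induction_on with
  | empty => intro _; simpa using hB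
  | @insert a s ha ih =>
      intro h
      rw [Finset.sum_insert ha]
      exact le_trans (hna _ _) (max_le (h a (Finset.mem_insert_self a s))
        (ih fun i hi => h i (Finset.mem_insert_of_mem hi)))

/-- The ring `B⁺_K = ⋃ₘ p^{-m}·O_K⟦X⟧ = O_K⟦X⟧[1/p]` of power series over `K` with
bounded coefficients (this is a subring since the norm is nonarchimedean). -/
noncomputable def Bplus (K : Type*) [NormedField K]
    (hna : IsNonarchimedean (fun x : K => ‖x‖)) : Subring (PowerSeries K) where
  carrier := {f | ∃ C : ℝ, ∀ k : ℕ, ‖(PowerSeries.coeff k) f‖ ≤ C}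
  zero_mem' := ⟨0, fun k => by simp⟩
  one_mem' := ⟨1, fun k => by
    rcases eq_or_ne k 0 with h | h <;> simp [PowerSeries.coeff_one, h]⟩
  add_mem' := by
    rintro f g ⟨Cf, hf⟩ ⟨Cg, hg⟩
    exact ⟨Cf + Cg, fun k => by
      simpa only [map_add] using le_trans (norm_add_le _ _) (add_le_add (hf k) (hg k))⟩
  neg_mem' := by
    rintro f ⟨C, hf⟩
    exact ⟨C, fun k => by simpa using hf k⟩
  mul_mem' := by
    rintro f g ⟨Cf, hf⟩ ⟨Cg, hg⟩
    refine ⟨(Cf ⊔ 0) * (Cg ⊔ 0), fun k => ?_⟩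
    rw [PowerSeries.coeff_mul]
    refine nonarch_finset_sum_le hna _ _ (by positivity) fun q hq => ?_
    rw [norm_mul]
    exact mul_le_mul (le_trans (hf q.1) (le_max_left _ _))
      (le_trans (hg q.2) (le_max_left _ _)) (norm_nonneg _)
      (le_trans (norm_nonneg _) (le_trans (hf 0) (le_max_left _ _)))

/-- Power series with bounded coefficients converge on the open unit disk. -/
lemma Bplus_le_BRig (K : Type*) [NormedField K]
    (hna : IsNonarchimedean (fun x : K => ‖x‖)) : Bplus K hna ≤ BRig K := by
  rintro f ⟨C, hC⟩ ρ h0 h1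
  have hlim : Tendsto (fun k : ℕ => (C ⊔ 0) * ρ ^ k) atTop (nhds 0) := by
    simpa using (tendsto_pow_atTop_nhds_zero_of_lt_one h0 h1).const_mul (C ⊔ 0)
  refine squeeze_zero (fun k => by positivity) (fun k => ?_) hlim
  exact mul_le_mul_of_nonneg_right (le_trans (hC k) (le_max_left _ _)) (by positivity)

section Helpers

variable {K : Type*} [NormedField K]

/-- Coefficientwise bound on a product, in the nonarchimedean setting. -/
lemma mul_coeff_bound (hna : IsNonarchimedean (fun x : K => ‖x‖))
    {f g : PowerSeries K} {C D : ℝ} (hC : 0 ≤ C)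
    (hf : ∀ k, ‖(PowerSeries.coeff k) f‖ ≤ C) (hg : ∀ k, ‖(PowerSeries.coeff k) g‖ ≤ D) :
    ∀ k, ‖(PowerSeries.coeff k) (f * g)‖ ≤ C * D := by
  intro k
  have hD : 0 ≤ D := le_trans (norm_nonneg _) (hg 0)
  rw [PowerSeries.coeff_mul]
  refine nonarch_finset_sum_le hna _ _ (by positivity) fun q _ => ?_
  rw [norm_mul]
  exact mul_le_mul (hf q.1) (hg q.2) (norm_nonneg _) hC

/-- A nonnegative sequence tending to zero that takes a positive value attains its maximum. -/
lemma exists_max_of_tendsto_zero {x : ℕ → ℝ}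
    (hlim : Tendsto x atTop (nhds 0)) {j₁ : ℕ} (hj₁ : 0 < x j₁) :
    ∃ j₀, ∀ j, x j ≤ x j₀ := by
  have hev : ∀ᶠ j in atTop, x j < x j₁ := hlim.eventually (eventually_lt_nhds hj₁)
  obtain ⟨N, hN⟩ := eventually_atTop.mp hev
  have hj₁N : j₁ < N := by
    by_contra h
    exact absurd (hN j₁ (not_lt.mp h)) (lt_irrefl _)
  obtain ⟨j₀, hj₀mem, hj₀⟩ := Finset.exists_max_image (Finset.range N) x ⟨j₁, Finset.mem_range.mpr hj₁N⟩
  refine ⟨j₀, fun j => ?_⟩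
  by_cases hj : j < N
  · exact hj₀ j (Finset.mem_range.mpr hj)
  · exact le_trans (hN j (not_lt.mp hj)).le (hj₀ j₁ (Finset.mem_range.mpr hj₁N))

end Helpers
section Helpers2

variable {K : Type*} [NormedField K]

/-- Coefficients of the inverse of a power series whose coefficients are bounded by `1`
and whose constant coefficient has norm `1` are again bounded by `1`. -/
lemma inv_coeff_bound (hna : IsNonarchimedean (fun x : K => ‖x‖))
    {B : PowerSeries K} (h0 : ‖(PowerSeries.constantCoeff) B‖ = 1)
    (hb : ∀ k, ‖(PowerSeries.coeff k) B‖ ≤ 1) :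
    ∀ k, ‖(PowerSeries.coeff k) B⁻¹‖ ≤ 1 := by
  intro k
  induction k using Nat.strong_induction_on with
  | _ k ih =>
    rw [PowerSeries.coeff_inv]
    split_ifs with hk
    · rw [norm_inv, h0]; norm_num
    · rw [norm_mul, norm_neg, norm_inv, h0, inv_one, one_mul]
      refine nonarch_finset_sum_le hna _ _ zero_le_one fun q _ => ?_
      split_ifs with hq
      · rw [norm_mul]
        simpa using mul_le_mul (hb q.1) (ih q.2 hq) (norm_nonneg _) zero_le_one
      · simp

/-- Decomposition of a power series into its truncation below degree `n` and
`X^n` times the shifted series. -/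
lemma trunc_add_shift (n : ℕ) (f : PowerSeries K) :
    f = (PowerSeries.mk fun k => if k < n then (PowerSeries.coeff k) f else 0)
      + PowerSeries.X ^ n * PowerSeries.mk (fun k => (PowerSeries.coeff (n + k)) f) := by
  ext k
  rw [map_add, PowerSeries.coeff_mk, PowerSeries.coeff_X_pow_mul']
  by_cases hk : k < n
  · rw [if_pos hk, if_neg (by omega)]
    simp
  · rw [if_neg hk, if_pos (by omega), PowerSeries.coeff_mk, zero_add]
    rw [Nat.add_sub_cancel' (not_lt.mp hk)]

end Helpers2
section Division

open PowerSeries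

variable {K : Type*} [NormedField K] [CompleteSpace K]

/-- Division with remainder by `X^n + A` where all coefficients of `A` have norm at most
`θ < 1`, with control on the coefficients of the quotient and the remainder. -/
lemma weierstrass_division (hna : IsNonarchimedean (fun x : K => ‖x‖))
    {θ : ℝ} (hθ0 : 0 ≤ θ) (hθ1 : θ < 1) (n : ℕ) {A : PowerSeries K}
    (hA : ∀ k, ‖(coeff k) A‖ ≤ θ)
    {g : PowerSeries K} {Cg : ℝ} (hCg : 0 ≤ Cg) (hg : ∀ k, ‖(coeff k) g‖ ≤ Cg) :
    ∃ q r : PowerSeries K, (∀ k, ‖(coeff k) q‖ ≤ Cg) ∧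
      (∀ k, ‖(coeff k) r‖ ≤ Cg) ∧ (∀ k, n ≤ k → (coeff k) r = 0) ∧
      g = q * (PowerSeries.X ^ n + A) + r := by
  classical
  obtain ⟨sh, hsh⟩ : ∃ sh : PowerSeries K → PowerSeries K,
      ∀ h k, (coeff k) (sh h) = (coeff (n + k)) h :=
    ⟨fun h => PowerSeries.mk fun k => (coeff (n + k)) h, fun h k => coeff_mk _ _⟩
  obtain ⟨tr, htr⟩ : ∃ tr : PowerSeries K → PowerSeries K,
      ∀ h k, (coeff k) (tr h) = if k < n then (coeff k) h else 0 :=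
    ⟨fun h => PowerSeries.mk fun k => if k < n then (coeff k) h else 0,
      fun h k => coeff_mk _ _⟩
  have hdecomp : ∀ h : PowerSeries K, h = tr h + PowerSeries.X ^ n * sh h := by
    intro h
    ext k
    rw [map_add, htr, PowerSeries.coeff_X_pow_mul']
    by_cases hk : k < n
    · rw [if_pos hk, if_neg (by omega), add_zero]
    · rw [if_neg hk, if_pos (by omega), hsh, zero_add, Nat.add_sub_cancel' (not_lt.mp hk)]
  set e : ℕ → PowerSeries K := fun j => (fun h => -(sh h * A))^[j] g with he
  have he0 : e 0 = g := rfl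
  have hes : ∀ j, e (j + 1) = -(sh (e j) * A) := by
    intro j
    rw [he]
    simp only [Function.iterate_succ_apply']
  have hebd : ∀ j k, ‖(coeff k) (e j)‖ ≤ Cg * θ ^ j := by
    intro j
    induction j with
    | zero => simpa [he0] using hg
    | succ j ih =>
      intro k
      rw [hes, map_neg, norm_neg, PowerSeries.coeff_mul]
      have hrw : Cg * θ ^ (j + 1) = Cg * θ ^ j * θ := by ring
      rw [hrw]
      refine nonarch_finset_sum_le hna _ _ (by positivity) fun q _ => ?_
      rw [norm_mul]
      refine mul_le_mul ?_ (hA q.2) (norm_nonneg _) (by positivity)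
      rw [hsh]
      exact ih (n + q.1)
  have htel : ∀ m, g = (∑ j ∈ Finset.range m, sh (e j)) * (PowerSeries.X ^ n + A)
      + (∑ j ∈ Finset.range m, tr (e j)) + e m := by
    intro m
    induction m with
    | zero => simp [he0]
    | succ m ih =>
      have hstep : e m = sh (e m) * (PowerSeries.X ^ n + A) + tr (e m) + e (m + 1) := by
        rw [hes m]
        nth_rewrite 1 [hdecomp (e m)]
        ring
      rw [Finset.sum_range_succ, Finset.sum_range_succ]
      conv_lhs => rw [ih, hstep]
      ring
  have hconv : ∀ (v : ℕ → PowerSeries K), (∀ j k, ‖(coeff k) (v j)‖ ≤ Cg * θ ^ j) → ∀ k : ℕ,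
      ∃ x : K, Tendsto (fun m => ∑ j ∈ Finset.range m, (coeff k) (v j)) atTop (nhds x) := by
    intro v hv k
    apply cauchySeq_tendsto_of_complete
    apply cauchySeq_of_le_geometric θ Cg hθ1
    intro m
    have hrw : (∑ j ∈ Finset.range m, (coeff k) (v j))
        - (∑ j ∈ Finset.range (m + 1), (coeff k) (v j)) = -((coeff k) (v m)) := by
      rw [Finset.sum_range_succ]
      ring
    rw [dist_eq_norm, hrw, norm_neg]
    exact hv m k
  have hshbd : ∀ j k, ‖(coeff k) (sh (e j))‖ ≤ Cg * θ ^ j := by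
    intro j k
    rw [hsh]
    exact hebd j (n + k)
  have htrbd : ∀ j k, ‖(coeff k) (tr (e j))‖ ≤ Cg * θ ^ j := by
    intro j k
    rw [htr]
    split_ifs with hk
    · exact hebd j k
    · simp only [norm_zero]
      positivity
  choose qc hqc using hconv (fun j => sh (e j)) hshbd
  choose rc hrc using hconv (fun j => tr (e j)) htrbd
  have hsumbd : ∀ (v : ℕ → PowerSeries K), (∀ j k, ‖(coeff k) (v j)‖ ≤ Cg * θ ^ j) →
      ∀ m k, ‖∑ j ∈ Finset.range m, (coeff k) (v j)‖ ≤ Cg := by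
    intro v hv m k
    refine nonarch_finset_sum_le hna _ _ hCg fun j _ => ?_
    calc ‖(coeff k) (v j)‖ ≤ Cg * θ ^ j := hv j k
      _ ≤ Cg * 1 := by
          refine mul_le_mul_of_nonneg_left (pow_le_one₀ hθ0 hθ1.le) hCg
      _ = Cg := mul_one Cg
  have hqbd : ∀ k, ‖qc k‖ ≤ Cg := fun k =>
    le_of_tendsto (hqc k).norm (Eventually.of_forall fun m => hsumbd _ hshbd m k)
  have hrbd : ∀ k, ‖rc k‖ ≤ Cg := fun k =>
    le_of_tendsto (hrc k).norm (Eventually.of_forall fun m => hsumbd _ htrbd m k)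
  have hrzero : ∀ k, n ≤ k → rc k = 0 := by
    intro k hk
    refine tendsto_nhds_unique (hrc k) ?_
    have : (fun m => ∑ j ∈ Finset.range m, (coeff k) (tr (e j))) = fun _ => (0 : K) := by
      funext m
      refine Finset.sum_eq_zero fun j _ => ?_
      rw [htr, if_neg (not_lt.mpr hk)]
    rw [this]
    exact tendsto_const_nhds
  refine ⟨PowerSeries.mk qc, PowerSeries.mk rc, fun k => by simpa using hqbd k,
    fun k => by simpa using hrbd k, fun k hk => by simpa using hrzero k hk, ?_⟩
  ext k
  have hterm : Tendsto (fun m => (coeff k) ((∑ j ∈ Finset.range m, sh (e j))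
        * (PowerSeries.X ^ n + A) + (∑ j ∈ Finset.range m, tr (e j)) + e m)) atTop
      (nhds ((coeff k) (PowerSeries.mk qc * (PowerSeries.X ^ n + A) + PowerSeries.mk rc))) := by
    have h1 : Tendsto (fun m => (coeff k) ((∑ j ∈ Finset.range m, sh (e j))
          * (PowerSeries.X ^ n + A))) atTop
        (nhds ((coeff k) (PowerSeries.mk qc * (PowerSeries.X ^ n + A)))) := by
      simp only [PowerSeries.coeff_mul, map_sum]
      refine tendsto_finset_sum _ fun ab _ => ?_
      have : Tendsto (fun m => ∑ j ∈ Finset.range m, (coeff ab.1) (sh (e j))) atTop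
          (nhds (qc ab.1)) := hqc ab.1
      have h' := this.mul_const ((coeff ab.2) (PowerSeries.X ^ n + A))
      simp only [map_add, PowerSeries.coeff_X_pow] at h'
      simpa using h'
    have h2 : Tendsto (fun m => (coeff k) (∑ j ∈ Finset.range m, tr (e j))) atTop
        (nhds ((coeff k) (PowerSeries.mk rc))) := by
      simp only [map_sum, PowerSeries.coeff_mk]
      exact hrc k
    have h3 : Tendsto (fun m => (coeff k) (e m)) atTop (nhds 0) := by
      refine squeeze_zero_norm (fun m => hebd m k) ?_
      have := (tendsto_pow_atTop_nhds_zero_of_lt_one hθ0 hθ1).const_mul Cg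
      simpa using this
    have := (h1.add h2).add h3
    simp only [map_add, add_zero] at this ⊢
    exact this
  have hconstseq : (fun m => (coeff k) ((∑ j ∈ Finset.range m, sh (e j))
        * (PowerSeries.X ^ n + A) + (∑ j ∈ Finset.range m, tr (e j)) + e m))
      = fun _ => (coeff k) g := by
    funext m
    exact (congrArg _ (htel m)).symm
  rw [hconstseq] at hterm
  exact tendsto_nhds_unique tendsto_const_nhds hterm

end Division
section Normalize

open PowerSeries

variable {K : Type*} [NormedField K]

/-- In a discretely valued field, a norm `< 1` is at most `θ`. -/
lemma le_theta_of_lt_one {θ : ℝ} (hθ0 : 0 < θ) (hθ1 : θ < 1)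
    (hdisc : ∀ x : K, x ≠ 0 → ∃ n : ℤ, ‖x‖ = θ ^ n) {x : K} (hx : ‖x‖ < 1) : ‖x‖ ≤ θ := by
  rcases eq_or_ne x 0 with rfl | hx0
  · simpa using hθ0.le
  · obtain ⟨m, hm⟩ := hdisc x hx0
    rw [hm] at hx ⊢
    have hm1 : (1 : ℤ) ≤ m := by
      by_contra h
      push_neg at h
      have h2 : θ ^ (0 : ℤ) ≤ θ ^ m := zpow_le_zpow_right_of_le_one₀ hθ0 hθ1.le (by omega)
      rw [zpow_zero] at h2
      linarith
    calc θ ^ m ≤ θ ^ (1 : ℤ) := zpow_le_zpow_right_of_le_one₀ hθ0 hθ1.le hm1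
      _ = θ := zpow_one θ

/-- A nonzero power series with coefficients bounded in norm attains its maximal
coefficient norm, by discreteness of the valuation. -/
lemma exists_max_coeff {θ : ℝ} (hθ0 : 0 < θ) (hθ1 : θ < 1)
    (hdisc : ∀ x : K, x ≠ 0 → ∃ n : ℤ, ‖x‖ = θ ^ n)
    {f : PowerSeries K} {C : ℝ} (hb : ∀ k, ‖(coeff k) f‖ ≤ C) (hf : f ≠ 0) :
    ∃ k₀, (coeff k₀) f ≠ 0 ∧ ∀ k, ‖(coeff k) f‖ ≤ ‖(coeff k₀) f‖ := by
  classical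
  obtain ⟨k₁, hk₁⟩ : ∃ k, (coeff k) f ≠ 0 := by
    by_contra h
    push_neg at h
    exact hf (PowerSeries.ext fun k => by simpa using h k)
  set E : Set ℤ := {m | ∃ k, (coeff k) f ≠ 0 ∧ ‖(coeff k) f‖ = θ ^ m} with hE
  obtain ⟨m₁, hm₁⟩ := hdisc _ hk₁
  have hEne : m₁ ∈ E := ⟨k₁, hk₁, hm₁⟩
  -- lower bound on E
  obtain ⟨N, hN⟩ : ∃ N : ℕ, C < (θ⁻¹) ^ N := pow_unbounded_of_one_lt C (one_lt_inv_iff₀.mpr ⟨hθ0, hθ1⟩)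
  have hlb : ∀ m ∈ E, -(N : ℤ) ≤ m := by
    rintro m ⟨k, hk, hnorm⟩
    have h1 : θ ^ m ≤ C := hnorm ▸ hb k
    have h2 : θ ^ m < θ ^ (-(N : ℤ)) := by
      refine lt_of_le_of_lt h1 ?_
      rw [zpow_neg, zpow_natCast, ← inv_pow]
      exact hN
    by_contra h
    push_neg at h
    have : θ ^ (-(N : ℤ)) ≤ θ ^ m := zpow_le_zpow_right_of_le_one₀ hθ0 hθ1.le (by omega)
    linarith
  obtain ⟨m₀, hm₀E, hm₀min⟩ := Int.exists_least_of_bdd ⟨-(N : ℤ), hlb⟩ ⟨m₁, hEne⟩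
  obtain ⟨k₀, hk₀ne, hk₀⟩ := hm₀E
  refine ⟨k₀, hk₀ne, fun k => ?_⟩
  rcases eq_or_ne ((coeff k) f) 0 with h | h
  · rw [h, norm_zero]
    exact norm_nonneg _
  · obtain ⟨m, hm⟩ := hdisc _ h
    rw [hm, hk₀]
    exact zpow_le_zpow_right_of_le_one₀ hθ0 hθ1.le (hm₀min m ⟨k, h, hm⟩)

/-- Predicate : `F` has all coefficients of norm at most 1, coefficient `n` of norm
exactly one and all earlier coefficients of norm at most `θ` ("normalized of order n"). -/
def IsDNormal (K : Type*) [NormedField K] (θ : ℝ) (n : ℕ) (F : PowerSeries K) : Prop :=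
  (∀ k, ‖(coeff k) F‖ ≤ 1) ∧ ‖(coeff n) F‖ = 1 ∧ ∀ k, k < n → ‖(coeff k) F‖ ≤ θ

/-- Every nonzero bounded power series can be scaled by a constant to a normalized one. -/
lemma exists_normalization {θ : ℝ} (hθ0 : 0 < θ) (hθ1 : θ < 1)
    (hdisc : ∀ x : K, x ≠ 0 → ∃ n : ℤ, ‖x‖ = θ ^ n)
    {f : PowerSeries K} {C : ℝ} (hb : ∀ k, ‖(coeff k) f‖ ≤ C) (hf : f ≠ 0) :
    ∃ (n : ℕ) (c : K), c ≠ 0 ∧ IsDNormal K θ n (PowerSeries.C c * f) := by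
  classical
  obtain ⟨k₀, hk₀ne, hk₀⟩ := exists_max_coeff hθ0 hθ1 hdisc hb hf
  set c : K := ((coeff k₀) f)⁻¹ with hc
  have hcne : c ≠ 0 := inv_ne_zero hk₀ne
  have hcf : ∀ k, ‖(coeff k) (PowerSeries.C c * f)‖ ≤ 1 := by
    intro k
    rw [PowerSeries.coeff_C_mul, norm_mul, hc, norm_inv,
      inv_mul_le_iff₀ (norm_pos_iff.mpr hk₀ne), mul_one]
    exact hk₀ k
  have hattain : ‖(coeff k₀) (PowerSeries.C c * f)‖ = 1 := by
    rw [PowerSeries.coeff_C_mul, norm_mul, hc, norm_inv]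
    exact inv_mul_cancel₀ (norm_ne_zero_iff.mpr hk₀ne)
  have hex : ∃ k, ‖(coeff k) (PowerSeries.C c * f)‖ = 1 := ⟨k₀, hattain⟩
  set n : ℕ := Nat.find hex with hn
  refine ⟨n, c, hcne, hcf, Nat.find_spec hex, fun k hk => ?_⟩
  have : ‖(coeff k) (PowerSeries.C c * f)‖ ≠ 1 := Nat.find_min hex hk
  exact le_theta_of_lt_one hθ0 hθ1 hdisc (lt_of_le_of_ne (hcf k) this)

end Normalize
section Factor

open PowerSeries

variable {K : Type*} [NormedField K]

/-- A normalized power series of order `n` factors, up to a unit with coefficients bounded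
by one, as `X^n + A` with all coefficients of `A` bounded by `θ`. -/
lemma factor_normal (hna : IsNonarchimedean (fun x : K => ‖x‖))
    {θ : ℝ} (hθ0 : 0 ≤ θ) {n : ℕ} {F : PowerSeries K} (hF : IsDNormal K θ n F) :
    ∃ U A : PowerSeries K, (∀ k, ‖(coeff k) U‖ ≤ 1) ∧ (∀ k, ‖(coeff k) A‖ ≤ θ) ∧
      U * F = PowerSeries.X ^ n + A ∧
      ∃ V : PowerSeries K, (∀ k, ‖(coeff k) V‖ ≤ 1) ∧ U * V = 1 := by
  classical
  obtain ⟨h1, h2, h3⟩ := hF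
  set A0 : PowerSeries K := PowerSeries.mk fun k => if k < n then (coeff k) F else 0 with hA0
  set B : PowerSeries K := PowerSeries.mk fun k => (coeff (n + k)) F with hB
  have hdec : F = A0 + PowerSeries.X ^ n * B := trunc_add_shift n F
  have hB0 : ‖(constantCoeff) B‖ = 1 := by
    rw [← PowerSeries.coeff_zero_eq_constantCoeff, hB, PowerSeries.coeff_mk]
    simpa using h2
  have hBne : (constantCoeff) B ≠ 0 := by
    intro h
    rw [h, norm_zero] at hB0
    norm_num at hB0
  have hBbd : ∀ k, ‖(coeff k) B‖ ≤ 1 := by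
    intro k
    rw [hB, PowerSeries.coeff_mk]
    exact h1 (n + k)
  have hA0bd : ∀ k, ‖(coeff k) A0‖ ≤ θ := by
    intro k
    rw [hA0, PowerSeries.coeff_mk]
    split_ifs with hk
    · exact h3 k hk
    · simpa using hθ0
  have hBinv := inv_coeff_bound hna hB0 hBbd
  have hmul : B * B⁻¹ = 1 := PowerSeries.mul_inv_cancel _ hBne
  refine ⟨B⁻¹, B⁻¹ * A0, hBinv, fun k => by
      simpa using mul_coeff_bound hna zero_le_one hBinv hA0bd k, ?_, B, hBbd, ?_⟩
  · rw [hdec, mul_add, show B⁻¹ * (PowerSeries.X ^ n * B) = PowerSeries.X ^ n * (B * B⁻¹) by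
      ring, hmul, mul_one]
    ring
  · rw [mul_comm]
    exact hmul

/-- If `(X^n + A) * g = h` with `g` converging on the open unit disk, `A` having
coefficients of norm at most `θ < 1` and `h` having coefficients bounded by `C`, then the
coefficients of `g` are bounded by `C` as well. -/
lemma bounded_of_mul_eq (hna : IsNonarchimedean (fun x : K => ‖x‖))
    {θ : ℝ} (hθ0 : 0 ≤ θ) (hθ1 : θ < 1) (n : ℕ)
    {A g h : PowerSeries K} (hA : ∀ k, ‖(coeff k) A‖ ≤ θ) (hg : g ∈ BRig K)
    {C : ℝ} (hC : 0 ≤ C) (hh : ∀ k, ‖(coeff k) h‖ ≤ C)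
    (heq : (PowerSeries.X ^ n + A) * g = h) : ∀ k, ‖(coeff k) g‖ ≤ C := by
  have step : ∀ ρ : ℝ, 0 < ρ → ρ < 1 → θ < ρ ^ n → ∀ j, ‖(coeff j) g‖ * ρ ^ j ≤ C := by
    intro ρ hρ0 hρ1 hρn
    by_contra hcon
    push_neg at hcon
    obtain ⟨j₁, hj₁⟩ := hcon
    have hx0 : 0 < ‖(coeff j₁) g‖ * ρ ^ j₁ := lt_of_le_of_lt hC hj₁
    obtain ⟨j₀, hj₀⟩ := exists_max_of_tendsto_zero (hg ρ hρ0.le hρ1) hx0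
    set S := ‖(coeff j₀) g‖ * ρ ^ j₀ with hS
    have hSpos : 0 < S := lt_of_lt_of_le hx0 (hj₀ j₁)
    have hCS : C < S := lt_of_lt_of_le hj₁ (hj₀ j₁)
    set k := j₀ + n with hk
    have hco : (coeff j₀) g = (coeff k) h - (coeff k) (A * g) := by
      have h' := congrArg (coeff k) heq
      rw [add_mul, map_add, hk, PowerSeries.coeff_X_pow_mul] at h'
      rw [hk]
      exact eq_sub_of_add_eq h'
    have hsum : ‖(coeff k) (A * g)‖ ≤ θ * (S / ρ ^ k) := by
      rw [PowerSeries.coeff_mul]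
      refine nonarch_finset_sum_le hna _ _ (by positivity) fun q hq => ?_
      rw [norm_mul]
      have hq2 : q.2 ≤ k := by
        have := Finset.HasAntidiagonal.mem_antidiagonal.mp hq
        omega
      have hgl : ‖(coeff q.2) g‖ ≤ S / ρ ^ q.2 := by
        rw [le_div_iff₀ (by positivity)]
        exact hj₀ q.2
      have hmono : S / ρ ^ q.2 ≤ S / ρ ^ k :=
        div_le_div_of_nonneg_left hSpos.le (by positivity)
          (pow_le_pow_of_le_one hρ0.le hρ1.le hq2)
      exact mul_le_mul (hA q.1) (hgl.trans hmono) (norm_nonneg _) hθ0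
    have hm : ‖(coeff j₀) g‖ ≤ max ‖(coeff k) h‖ (θ * (S / ρ ^ k)) := by
      rw [hco, sub_eq_add_neg]
      refine le_trans (hna _ _) ?_
      simp only [norm_neg]
      exact max_le_max le_rfl hsum
    have hfin : S ≤ max C (θ / ρ ^ n * S) := by
      have h4 : S ≤ max ‖(coeff k) h‖ (θ * (S / ρ ^ k)) * ρ ^ j₀ :=
        mul_le_mul_of_nonneg_right hm (by positivity)
      rw [max_mul_of_nonneg _ _ (by positivity : (0:ℝ) ≤ ρ ^ j₀)] at h4
      refine le_trans h4 (max_le_max ?_ ?_)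
      · calc ‖(coeff k) h‖ * ρ ^ j₀ ≤ C * 1 :=
              mul_le_mul (hh k) (pow_le_one₀ hρ0.le hρ1.le) (by positivity) hC
          _ = C := mul_one C
      · have hrk : ρ ^ k = ρ ^ j₀ * ρ ^ n := by rw [hk, pow_add]
        rw [hrk]
        have hne1 : (ρ:ℝ) ^ j₀ ≠ 0 := by positivity
        have hne2 : (ρ:ℝ) ^ n ≠ 0 := by positivity
        have heqq : θ * (S / (ρ ^ j₀ * ρ ^ n)) * ρ ^ j₀ = θ / ρ ^ n * S := by
          field_simp
        exact le_of_eq heqq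
    have hlt : max C (θ / ρ ^ n * S) < S := by
      refine max_lt hCS ?_
      have : θ / ρ ^ n < 1 := (div_lt_one (by positivity)).mpr hρn
      exact mul_lt_of_lt_one_left hSpos this
    exact absurd hfin (not_le.mpr hlt)
  intro j
  set ρseq : ℕ → ℝ := fun m => 1 - 1 / (m + 2) with hρseq
  have hρlim : Tendsto ρseq atTop (nhds 1) := by
    have h0 : Tendsto (fun m : ℕ => 1 / ((m : ℝ) + 2)) atTop (nhds 0) := by
      have h' := (tendsto_one_div_add_atTop_nhds_zero_nat (𝕜 := ℝ)).comp (tendsto_add_atTop_nat 1)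
      refine h'.congr fun m => ?_
      simp only [Function.comp_apply]
      push_cast
      ring
    have h2 : Tendsto (fun m : ℕ => 1 - 1 / ((m:ℝ) + 2)) atTop (nhds (1 - 0)) :=
      (tendsto_const_nhds : Tendsto (fun _ : ℕ => (1:ℝ)) atTop (nhds 1)).sub h0
    rw [hρseq]
    simpa [one_div] using h2
  have h01 : ∀ m : ℕ, 0 < ρseq m ∧ ρseq m < 1 := by
    intro m
    have hm2 : (0:ℝ) < (m:ℝ) + 2 := by positivity
    constructor
    · rw [hρseq]
      simp only
      have : 1 / ((m:ℝ) + 2) < 1 := by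
        rw [div_lt_one hm2]
        linarith
      linarith
    · rw [hρseq]
      simp only
      have : 0 < 1 / ((m:ℝ) + 2) := by positivity
      linarith
  have hev : ∀ᶠ m in atTop, θ < (ρseq m) ^ n := by
    have hpow : Tendsto (fun m => (ρseq m) ^ n) atTop (nhds 1) := by
      simpa using hρlim.pow n
    exact hpow.eventually (eventually_gt_nhds (lt_of_lt_of_le hθ1 le_rfl))
  have hle : ∀ᶠ m in atTop, ‖(coeff j) g‖ * (ρseq m) ^ j ≤ C :=
    hev.mono fun m hm => step (ρseq m) (h01 m).1 (h01 m).2 hm j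
  have hten : Tendsto (fun m => ‖(coeff j) g‖ * (ρseq m) ^ j) atTop
      (nhds (‖(coeff j) g‖)) := by
    have := (hρlim.pow j).const_mul ‖(coeff j) g‖
    simpa using this
  exact le_of_tendsto hten hle

end Factor
section PID

open PowerSeries

variable {K : Type*} [NormedField K] [CompleteSpace K]

lemma coeff_C_bound (c : K) : ∀ k, ‖(coeff k) (PowerSeries.C c)‖ ≤ ‖c‖ := by
  intro k
  rw [PowerSeries.coeff_C]
  split_ifs
  · exact le_refl _
  · simpa using norm_nonneg c

/-- Every ideal of `B⁺` is principal. -/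
lemma Bplus_ideal_principal (hna : IsNonarchimedean fun x : K => ‖x‖)
    {θ : ℝ} (hθ0 : 0 < θ) (hθ1 : θ < 1)
    (hdisc : ∀ x : K, x ≠ 0 → ∃ n : ℤ, ‖x‖ = θ ^ n)
    (I : Ideal (Bplus K hna)) : ∃ a, I = Ideal.span {a} := by
  classical
  by_cases hI : I = ⊥
  · exact ⟨0, by rw [hI, eq_comm, Ideal.span_singleton_eq_bot]⟩
  · obtain ⟨f0, hf0I, hf0⟩ := Submodule.exists_mem_ne_zero_of_ne_bot hI
    set NS : Set ℕ := {n | ∃ f : Bplus K hna, f ∈ I ∧ (f : PowerSeries K) ≠ 0 ∧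
      ∃ c : K, IsDNormal K θ n (PowerSeries.C c * (f : PowerSeries K))} with hNS
    have hne : NS.Nonempty := by
      obtain ⟨Cf, hCf⟩ := f0.2
      have hf0' : (f0 : PowerSeries K) ≠ 0 := fun h => hf0 (Subtype.ext h)
      obtain ⟨n, c, hc, hnorm⟩ := exists_normalization hθ0 hθ1 hdisc hCf hf0'
      exact ⟨n, f0, hf0I, hf0', c, hnorm⟩
    obtain ⟨f, hfI, hfne, c, hfnorm⟩ := Nat.sInf_mem hne
    set n0 := sInf NS
    refine ⟨f, le_antisymm ?_ ?_⟩
    swap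
    · rw [Ideal.span_le, Set.singleton_subset_iff]
      exact hfI
    · intro g hgI
      rw [Ideal.mem_span_singleton']
      obtain ⟨U, A, hU, hA, hUF, V, hV, hUV⟩ := factor_normal hna hθ0.le hfnorm
      obtain ⟨Cg', hCg'⟩ := g.2
      have hCg : ∀ k, ‖(coeff k) (g : PowerSeries K)‖ ≤ max Cg' 0 :=
        fun k => le_trans (hCg' k) (le_max_left _ _)
      obtain ⟨q, r, hq, hr, hrz, hgqr⟩ :=
        weierstrass_division hna hθ0.le hθ1 n0 hA (le_max_right Cg' 0) hCg
      have key : (g : PowerSeries K)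
          = (q * (U * PowerSeries.C c)) * (f : PowerSeries K) + r := by
        rw [hgqr, ← hUF]
        ring
      have hUq : U ∈ Bplus K hna := ⟨1, hU⟩
      have hqq : q ∈ Bplus K hna := ⟨max Cg' 0, hq⟩
      have hCc : PowerSeries.C c ∈ Bplus K hna := ⟨‖c‖, coeff_C_bound c⟩
      set Q : Bplus K hna := ⟨q * (U * PowerSeries.C c),
        mul_mem hqq (mul_mem hUq hCc)⟩ with hQ
      have hrmem : r ∈ Bplus K hna := ⟨max Cg' 0, hr⟩
      set rS : Bplus K hna := ⟨r, hrmem⟩ with hrS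
      have hrsub : rS = g - Q * f := by
        refine Subtype.ext ?_
        show r = (g : PowerSeries K) - (q * (U * PowerSeries.C c)) * (f : PowerSeries K)
        rw [key]
        ring
      have hrI : rS ∈ I := by
        rw [hrsub]
        exact Ideal.sub_mem I hgI (Ideal.mul_mem_left I Q hfI)
      by_cases hr0 : rS = 0
      · refine ⟨Q, ?_⟩
        refine Subtype.ext ?_
        have hrzero : r = 0 := congrArg (fun z : Bplus K hna => (z : PowerSeries K)) hr0
        show (q * (U * PowerSeries.C c)) * (f : PowerSeries K) = (g : PowerSeries K)
        rw [key, hrzero, add_zero]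
      · exfalso
        have hrne : r ≠ 0 := fun h => hr0 (Subtype.ext h)
        obtain ⟨n', c', hc', hnorm'⟩ := exists_normalization hθ0 hθ1 hdisc hr hrne
        have hn' : n' ∈ NS := ⟨rS, hrI, hrne, c', hnorm'⟩
        have hlt : n' < n0 := by
          by_contra hge
          push_neg at hge
          have hzero : (coeff n') (PowerSeries.C c' * r) = 0 := by
            rw [PowerSeries.coeff_C_mul, hrz n' hge, mul_zero]
          have hone := hnorm'.2.1
          rw [hzero, norm_zero] at hone
          norm_num at hone
        exact absurd (Nat.sInf_le hn') (not_le.mpr hlt)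

end PID
section FlatGeneric

open TensorProduct

/-- Over a domain all of whose ideals are principal, any torsion-free algebra
(e.g. a domain containing it) is flat. -/
lemma flat_of_principal_of_domain {R M : Type*} [CommRing R] [CommRing M] [IsDomain M]
    [Algebra R M] (hinj : Function.Injective (algebraMap R M))
    (hPID : ∀ I : Ideal R, ∃ a, I = Ideal.span {a}) : Module.Flat R M := by
  classical
  rw [Module.Flat.iff_rTensor_injective']
  intro I
  obtain ⟨a, ha⟩ := hPID I
  subst ha
  have ham : a ∈ Ideal.span {a} := Ideal.mem_span_singleton_self a
  have hrep : ∀ z : (Ideal.span {a} : Ideal R) ⊗[R] M,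
      ∃ m : M, z = (⟨a, ham⟩ : Ideal.span {a}) ⊗ₜ[R] m := by
    intro z
    induction z using TensorProduct.induction_on with
    | zero => exact ⟨0, by rw [TensorProduct.tmul_zero]⟩
    | tmul x m =>
      obtain ⟨t, ht⟩ := Ideal.mem_span_singleton'.mp x.2
      refine ⟨t • m, ?_⟩
      have hx : x = t • (⟨a, ham⟩ : Ideal.span {a}) := by
        refine Subtype.ext ?_
        show (x : R) = t * a
        rw [ht]
      rw [hx, TensorProduct.smul_tmul]
    | add z1 z2 ih1 ih2 =>
      obtain ⟨m1, rfl⟩ := ih1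
      obtain ⟨m2, rfl⟩ := ih2
      exact ⟨m1 + m2, by rw [TensorProduct.tmul_add]⟩
  intro z1 z2 hz
  obtain ⟨m1, rfl⟩ := hrep z1
  obtain ⟨m2, rfl⟩ := hrep z2
  have hz' := congrArg (TensorProduct.lid R M) hz
  simp only [LinearMap.rTensor_tmul, Submodule.coe_subtype, TensorProduct.lid_tmul] at hz'
  by_cases ha0 : a = 0
  · have hzero : (⟨a, ham⟩ : Ideal.span {a}) = 0 := Subtype.ext ha0
    rw [hzero, TensorProduct.zero_tmul, TensorProduct.zero_tmul]
  · have hmul : algebraMap R M a * m1 = algebraMap R M a * m2 := by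
      rw [← Algebra.smul_def, ← Algebra.smul_def]
      exact hz'
    have hane : algebraMap R M a ≠ 0 := by
      intro h0
      exact ha0 (hinj (by rw [h0, map_zero]))
    rw [mul_left_cancel₀ hane hmul]

/-- Faithful flatness from flatness, principality of ideals and the fact that any
inverse in `M` of an element of `R` already lies in `R`. -/
lemma faithfullyFlat_of_principal {R M : Type*} [CommRing R] [CommRing M] [IsDomain M]
    [Algebra R M] (hinj : Function.Injective (algebraMap R M))
    (hPID : ∀ I : Ideal R, ∃ a, I = Ideal.span {a})
    (hdesc : ∀ (f : R) (y : M), algebraMap R M f * y = 1 → IsUnit f) :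
    Module.FaithfullyFlat R M := by
  refine { toFlat := flat_of_principal_of_domain hinj hPID, submodule_ne_top := ?_ }
  intro m hm htop
  obtain ⟨f, hf⟩ := hPID m
  have h1 : (1 : M) ∈ m • (⊤ : Submodule R M) := by
    rw [htop]
    trivial
  have hex : ∃ y : M, algebraMap R M f * y = 1 := by
    refine Submodule.smul_induction_on h1 ?_ ?_
    · intro a haI x _
      rw [hf, Ideal.mem_span_singleton'] at haI
      obtain ⟨t, ht⟩ := haI
      refine ⟨algebraMap R M t * x, ?_⟩
      rw [Algebra.smul_def, ← ht, map_mul]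
      ring
    · rintro x y ⟨y1, h1'⟩ ⟨y2, h2'⟩
      exact ⟨y1 + y2, by rw [mul_add, h1', h2']⟩
  obtain ⟨y, hy⟩ := hex
  have hmt : m = ⊤ := by
    rw [hf]
    exact Ideal.span_singleton_eq_top.mpr (hdesc f y hy)
  exact hm.ne_top hmt

end FlatGeneric
theorem statement2
    (p : ℕ) (hp : p.Prime)
    (K : Type*) [NormedField K] [CompleteSpace K] [CharZero K]
    -- the absolute value is nonarchimedean ...
    (hna : IsNonarchimedean (fun x : K => ‖x‖))
    -- ... and induced by a discrete valuation in which `p` is a uniformizer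
    (hp1 : ‖(p : K)‖ < 1)
    (hdisc : ∀ x : K, x ≠ 0 → ∃ n : ℤ, ‖x‖ = ‖(p : K)‖ ^ n) :
    Bplus K hna ≤ BRig K ∧
      (letI : Algebra (Bplus K hna) (BRig K) :=
        (Subring.inclusion (Bplus_le_BRig K hna)).toAlgebra
      Module.FaithfullyFlat (Bplus K hna) (BRig K)) := by
  classical
  have hθ0 : 0 < ‖(p : K)‖ := by
    have hpne : ((p : ℕ) : K) ≠ 0 := Nat.cast_ne_zero.mpr hp.ne_zero
    exact norm_pos_iff.mpr hpne
  refine ⟨Bplus_le_BRig K hna, ?_⟩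
  letI : Algebra (Bplus K hna) (BRig K) :=
    (Subring.inclusion (Bplus_le_BRig K hna)).toAlgebra
  have hPID := fun I => Bplus_ideal_principal hna hθ0 hp1 hdisc I
  have hinj : Function.Injective (algebraMap (Bplus K hna) (BRig K)) := by
    intro x y hxy
    have : (x : PowerSeries K) = (y : PowerSeries K) :=
      congrArg (fun z : BRig K => (z : PowerSeries K)) hxy
    exact Subtype.ext this
  refine faithfullyFlat_of_principal hinj hPID ?_
  -- the descent of units property
  intro f gM hgM
  have hfne : (f : PowerSeries K) ≠ 0 := by
    intro h0
    have hf0 : f = 0 := Subtype.ext h0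
    rw [hf0, map_zero, zero_mul] at hgM
    exact zero_ne_one hgM
  have hcoe : (f : PowerSeries K) * ((gM : BRig K) : PowerSeries K) = 1 := by
    have := congrArg (fun z : BRig K => (z : PowerSeries K)) hgM
    exact this
  obtain ⟨Cf, hCf⟩ := f.2
  obtain ⟨n, c, hc, hnorm⟩ := exists_normalization hθ0 hp1 hdisc hCf hfne
  obtain ⟨U, A, hU, hA, hUF, V, hV, hUV⟩ := factor_normal hna hθ0.le hnorm
  have heq2 : (PowerSeries.X ^ n + A) * ((gM : BRig K) : PowerSeries K)
      = U * PowerSeries.C c := by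
    rw [← hUF]
    calc (U * (PowerSeries.C c * (f : PowerSeries K))) * ((gM : BRig K) : PowerSeries K)
        = (U * PowerSeries.C c)
            * ((f : PowerSeries K) * ((gM : BRig K) : PowerSeries K)) := by
          ring
      _ = (U * PowerSeries.C c) * 1 := by rw [hcoe]
      _ = U * PowerSeries.C c := mul_one _
  have hhbd : ∀ k, ‖(PowerSeries.coeff k) (U * PowerSeries.C c)‖ ≤ ‖c‖ := fun k => by
    simpa using mul_coeff_bound hna zero_le_one hU (coeff_C_bound c) k
  have hgbd := bounded_of_mul_eq hna hθ0.le hp1 n hA gM.2 (norm_nonneg c) hhbd heq2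
  have hgmem : ((gM : BRig K) : PowerSeries K) ∈ Bplus K hna := ⟨‖c‖, hgbd⟩
  refine IsUnit.of_mul_eq_one (a := f) (⟨(gM : BRig K), hgmem⟩ : Bplus K hna) ?_
  refine Subtype.ext ?_
  show (f : PowerSeries K) * ((gM : BRig K) : PowerSeries K) = 1
  exact hcoe
end
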